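/- Let X ⊂ ℙ³ be a smooth surface of degree d ≥ 5 containing a line ℓ. For a general plane H containing ℓ, write H ∩ X = ℓ ∪ C_H with C_H a plane curve of degree d − 1. Then the divisor D = C_H ∩ ℓ on ℓ (of degree d − 1) cannot be supported at a single point for general H; equivalently, the congruence of tangent lines of X along ℓ does not have order one. -/

import Mathlib

open MvPolynomial

private lemma aux_chain {σ τ : Type*} [Fintype σ] [DecidableEq σ] [DecidableEq τ]
    (v : σ → MvPolynomial τ ℂ) (j : τ) (F : MvPolynomial σ ℂ) :
    pderiv j (aeval v F) = ∑ i, aeval v (pderiv i F) * pderiv j (v i) := by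
  induction F using MvPolynomial.induction_on with
  | C a => simp
  | add p q hp hq => simp only [map_add, hp, hq, add_mul, Finset.sum_add_distrib]
  | mul_X p k hp =>
      have h1 : ∀ i : σ, pderiv i (p * X k) = pderiv i p * X k + if i = k then p else 0 := by
        intro i
        rw [pderiv_mul]
        rcases eq_or_ne i k with h | h
        · subst h; rw [pderiv_X_self, mul_one, if_pos rfl]
        · rw [pderiv_X_of_ne (Ne.symm h), mul_zero, if_neg h]
      have hL : pderiv j (aeval v (p * X k))
          = pderiv j (aeval v p) * v k + aeval v p * pderiv j (v k) := by
        rw [map_mul, aeval_X, pderiv_mul]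
      have hR : ∀ i : σ, aeval v (pderiv i (p * X k)) * pderiv j (v i)
          = aeval v (pderiv i p) * pderiv j (v i) * v k
            + (if i = k then aeval v p * pderiv j (v i) else 0) := by
        intro i
        rcases eq_or_ne i k with h | h
        · subst h; rw [h1, if_pos rfl, map_add, map_mul, aeval_X, if_pos rfl]; ring
        · rw [h1, if_neg h, if_neg h, map_add, map_mul, aeval_X, map_zero, add_zero, add_zero]
          ring
      rw [hL, hp, Finset.sum_mul, Finset.sum_congr rfl fun i _ => hR i,
        Finset.sum_add_distrib, Finset.sum_ite_eq' Finset.univ k, if_pos (Finset.mem_univ k)]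

/-- let `X = V(F) ⊂ ℙ³` be a smooth surface of degree `d ≥ 5` containing the
line `ℓ` spanned by `e, f`.  Each plane `H ⊇ ℓ` cuts `X` in `ℓ` plus a residual curve
`C_H` of degree `d - 1`, and the divisor `D = C_H ∩ ℓ` on `ℓ ≅ ℙ¹` is cut out by the
binary form `φ_H(s,t) = ∑ᵢ gᵢ ∂ᵢF(s·e + t·f)` of degree `d - 1`, where `g` spans `H`
together with `e, f`.  Then for a general plane `H` of the pencil (parameterized in the
affine chart `g = g₀ + x·g₁`) the divisor `D` is NOT supported at a single point: the set
of parameters `x` for which `φ_H` is proportional to a `(d-1)`-st power of a linear form is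
finite.  Equivalently, the congruence of tangent lines of `X` along `ℓ` has not order one. -/
theorem stmt10 (d : ℕ) (hd : 5 ≤ d)
    (F : MvPolynomial (Fin 4) ℂ) (hF : F.IsHomogeneous d)
    (hsm : ∀ v : Fin 4 → ℂ, v ≠ 0 → eval v F = 0 → ∃ i, eval v (pderiv i F) ≠ 0)
    (e f : Fin 4 → ℂ) (hef : LinearIndependent ℂ ![e, f])
    (hline : ∀ s t : ℂ, eval (s • e + t • f) F = 0)
    (g₀ g₁ : Fin 4 → ℂ) (hbasis : LinearIndependent ℂ ![e, f, g₀, g₁]) :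
    Set.Finite {x : ℂ | ∃ a b c : ℂ, ∀ s t : ℂ,
      (∑ i : Fin 4, (g₀ i + x * g₁ i) * eval (s • e + t • f) (pderiv i F)) =
        c * (a * s + b * t) ^ (d - 1)} := by
  classical
  have hn0 : d - 1 ≠ 0 := by omega
  -- the substitution realizing restriction to the line
  set v : Fin 4 → MvPolynomial (Fin 2) ℂ := fun i => C (e i) * X 0 + C (f i) * X 1 with hv
  have heval : ∀ (G : MvPolynomial (Fin 4) ℂ) (s t : ℂ),
      eval ![s, t] (aeval v G) = eval (s • e + t • f) G := by
    intro G
    induction G using MvPolynomial.induction_on with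
    | C a => intro s t; simp [hv]
    | add p q hp hq => intro s t; simp only [map_add, hp, hq]
    | mul_X p k hp =>
        intro s t
        rw [map_mul, eval_mul, hp]
        simp only [map_mul, aeval_X, eval_mul, hp, hv, map_add, eval_C, eval_X,
          Matrix.cons_val_zero, Matrix.cons_val_one, Matrix.head_cons,
          Pi.add_apply, Pi.smul_apply, smul_eq_mul]
        ring
  have hΦ : aeval v F = 0 := by
    apply MvPolynomial.funext
    intro w
    have hw : w = ![w 0, w 1] := by
      funext j; fin_cases j <;> rfl
    rw [map_zero, hw, heval F (w 0) (w 1), hline]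
  -- tangency: the gradient pairs to zero with e and f along the line
  have hgrad : ∀ (u : Fin 4 → ℂ) (j : Fin 2), (∀ i, pderiv j (v i) = C (u i)) →
      ∀ s t : ℂ, (∑ i, u i * eval (s • e + t • f) (pderiv i F)) = 0 := by
    intro u j hu s t
    have hch := aux_chain v j F
    rw [hΦ, map_zero] at hch
    have hch2 := congrArg (eval ![s, t]) hch.symm
    simp only [map_zero, map_sum, eval_mul, hu, eval_C, heval] at hch2
    rw [← hch2]
    exact Finset.sum_congr rfl fun i _ => mul_comm _ _
  have htan0 : ∀ s t : ℂ, (∑ i, e i * eval (s • e + t • f) (pderiv i F)) = 0 := by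
    apply hgrad e 0
    intro i
    rw [hv]
    simp only [map_add, Derivation.leibniz]
    rw [pderiv_X_self, pderiv_X_of_ne (show (1 : Fin 2) ≠ 0 by decide), pderiv_C, pderiv_C]
    simp
  have htan1 : ∀ s t : ℂ, (∑ i, f i * eval (s • e + t • f) (pderiv i F)) = 0 := by
    apply hgrad f 1
    intro i
    rw [hv]
    simp only [map_add, Derivation.leibniz]
    rw [pderiv_X_self, pderiv_X_of_ne (show (0 : Fin 2) ≠ 1 by decide), pderiv_C, pderiv_C]
    simp
  -- the two members of the pencil of tangent forms
  set A : ℂ → ℂ → ℂ := fun s t => ∑ i, g₀ i * eval (s • e + t • f) (pderiv i F) with hA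
  set B : ℂ → ℂ → ℂ := fun s t => ∑ i, g₁ i * eval (s • e + t • f) (pderiv i F) with hB
  -- base-point-freeness
  have hAB : ∀ s t : ℂ, ¬(s = 0 ∧ t = 0) → ¬(A s t = 0 ∧ B s t = 0) := by
    rintro s t hst ⟨hA0, hB0⟩
    simp only [hA] at hA0
    simp only [hB] at hB0
    have hvne : s • e + t • f ≠ 0 := by
      intro h
      have h2 := Fintype.linearIndependent_iff.mp hef ![s, t] ?_
      · exact hst ⟨h2 0, h2 1⟩
      · rw [Fin.sum_univ_two]
        simpa using h
    obtain ⟨i₀, hi₀⟩ := hsm _ hvne (hline s t)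
    set W : Fin 4 → ℂ := fun i => eval (s • e + t • f) (pderiv i F) with hW
    let T : (Fin 4 → ℂ) →ₗ[ℂ] ℂ :=
      { toFun := fun u => ∑ i, u i * W i
        map_add' := by intro u w; simp [add_mul, Finset.sum_add_distrib]
        map_smul' := by
          intro m u
          simp only [Pi.smul_apply, smul_eq_mul, RingHom.id_apply, Finset.mul_sum]
          exact Finset.sum_congr rfl fun i _ => by ring }
    have hcard : Fintype.card (Fin 4) = Module.finrank ℂ (Fin 4 → ℂ) := by simp
    let bb := basisOfLinearIndependentOfCardEqFinrank hbasis hcard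
    have hbb : ∀ i, bb i = ![e, f, g₀, g₁] i := fun i =>
      congrFun (coe_basisOfLinearIndependentOfCardEqFinrank hbasis hcard) i
    have hT : T = 0 := by
      apply bb.ext
      intro i
      rw [hbb i]
      fin_cases i
      · simpa [T] using htan0 s t
      · simpa [T] using htan1 s t
      · simpa [T] using hA0
      · simpa [T] using hB0
    have hW0 : W i₀ = 0 := by
      have h4 := LinearMap.congr_fun hT (Pi.single i₀ 1)
      simpa [T, Pi.single_apply] using h4
    exact hi₀ hW0
  -- splitting of the pencil
  have hsplit : ∀ x s t : ℂ,
      (∑ i : Fin 4, (g₀ i + x * g₁ i) * eval (s • e + t • f) (pderiv i F))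
        = A s t + x * B s t := by
    intro x s t
    simp only [hA, hB]
    rw [Finset.mul_sum, ← Finset.sum_add_distrib]
    exact Finset.sum_congr rfl fun i _ => by ring
  -- two members of the pencil vanishing at a common point off the origin: impossible
  have clash : ∀ s t : ℂ, ¬(s = 0 ∧ t = 0) → ∀ y z : ℂ, y ≠ z →
      A s t + y * B s t = 0 → A s t + z * B s t = 0 → False := by
    intro s t hst y z hyz h1 h2
    have hB0 : B s t = 0 := by
      have h : (y - z) * B s t = 0 := by linear_combination h1 - h2
      rcases mul_eq_zero.mp h with h | h
      · exact absurd (sub_eq_zero.mp h) hyz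
      · exact h
    have hA0 : A s t = 0 := by linear_combination h1 - y * hB0
    exact hAB s t hst ⟨hA0, hB0⟩
  -- non-degeneracy of a pure-power member
  have key1 : ∀ y z aa bb cc aa' bb' cc' : ℂ, y ≠ z →
      (∀ s t : ℂ, A s t + y * B s t = cc * (aa * s + bb * t) ^ (d - 1)) →
      (∀ s t : ℂ, A s t + z * B s t = cc' * (aa' * s + bb' * t) ^ (d - 1)) →
      cc ≠ 0 ∧ ¬(aa = 0 ∧ bb = 0) := by
    intro y z aa bb cc aa' bb' cc' hyz hy hz
    by_contra hcon
    have hzero : ∀ s t : ℂ, A s t + y * B s t = 0 := by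
      intro s t
      rw [hy s t]
      rcases not_and_or.mp hcon with h | h
      · rw [not_not.mp h, zero_mul]
      · obtain ⟨ha, hb⟩ := not_not.mp h
        rw [ha, hb, zero_mul, zero_mul, add_zero, zero_pow hn0, mul_zero]
    rcases Classical.em (aa' = 0 ∧ bb' = 0) with ⟨ha', hb'⟩ | hne'
    · have h1 := hz 1 0
      rw [ha', hb', zero_mul, zero_mul, add_zero, zero_pow hn0, mul_zero] at h1
      exact clash 1 0 (by simp) y z hyz (hzero 1 0) h1
    · have h1 := hz bb' (-aa')
      rw [show aa' * bb' + bb' * (-aa') = 0 by ring, zero_pow hn0, mul_zero] at h1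
      refine clash bb' (-aa') ?_ y z hyz (hzero bb' (-aa')) h1
      rintro ⟨hb1, ha1⟩
      exact hne' ⟨neg_eq_zero.mp ha1, hb1⟩
  -- pairwise independence of the linear forms
  have key2 : ∀ y z aa bb cc aa' bb' cc' : ℂ, y ≠ z →
      (∀ s t : ℂ, A s t + y * B s t = cc * (aa * s + bb * t) ^ (d - 1)) →
      (∀ s t : ℂ, A s t + z * B s t = cc' * (aa' * s + bb' * t) ^ (d - 1)) →
      aa * bb' - aa' * bb ≠ 0 := by
    intro y z aa bb cc aa' bb' cc' hyz hy hz hdet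
    obtain ⟨-, hne⟩ := key1 y z aa bb cc aa' bb' cc' hyz hy hz
    have h1 := hy bb (-aa)
    rw [show aa * bb + bb * (-aa) = 0 by ring, zero_pow hn0, mul_zero] at h1
    have h2 := hz bb (-aa)
    rw [show aa' * bb + bb' * (-aa) = -(aa * bb' - aa' * bb) by ring, hdet, neg_zero,
      zero_pow hn0, mul_zero] at h2
    refine clash bb (-aa) ?_ y z hyz h1 h2
    rintro ⟨hb1, ha1⟩
    exact hne ⟨neg_eq_zero.mp ha1, hb1⟩
  -- main argument: suppose the set is infinite
  by_contra hfin
  have hS : Set.Infinite {x : ℂ | ∃ a b c : ℂ, ∀ s t : ℂ,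
      (∑ i : Fin 4, (g₀ i + x * g₁ i) * eval (s • e + t • f) (pderiv i F)) =
        c * (a * s + b * t) ^ (d - 1)} := hfin
  let E := hS.natEmbedding
  have hxne : ∀ j k : ℕ, j ≠ k → ((E j : ℂ)) ≠ ((E k : ℂ)) := fun j k hjk h =>
    hjk (E.injective (Subtype.ext h))
  obtain ⟨a0, b0, c0, h0⟩ := (E 0).2
  obtain ⟨a1, b1, c1, h1⟩ := (E 1).2
  obtain ⟨a2, b2, c2, h2⟩ := (E 2).2
  set x0 : ℂ := (E 0 : ℂ) with hx0
  set x1 : ℂ := (E 1 : ℂ) with hx1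
  set x2 : ℂ := (E 2 : ℂ) with hx2
  have hφ0 : ∀ s t : ℂ, A s t + x0 * B s t = c0 * (a0 * s + b0 * t) ^ (d - 1) := fun s t => by
    rw [← hsplit]; exact h0 s t
  have hφ1 : ∀ s t : ℂ, A s t + x1 * B s t = c1 * (a1 * s + b1 * t) ^ (d - 1) := fun s t => by
    rw [← hsplit]; exact h1 s t
  have hφ2 : ∀ s t : ℂ, A s t + x2 * B s t = c2 * (a2 * s + b2 * t) ^ (d - 1) := fun s t => by
    rw [← hsplit]; exact h2 s t
  have hx01 : x0 ≠ x1 := hxne 0 1 (by decide)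
  have hx10 : x1 ≠ x0 := hxne 1 0 (by decide)
  have hx20 : x2 ≠ x0 := hxne 2 0 (by decide)
  have hx21 : x2 ≠ x1 := hxne 2 1 (by decide)
  obtain ⟨hc0, hab0⟩ := key1 x0 x1 a0 b0 c0 a1 b1 c1 hx01 hφ0 hφ1
  obtain ⟨hc2, hab2⟩ := key1 x2 x0 a2 b2 c2 a0 b0 c0 hx20 hφ2 hφ0
  have hd01 : a0 * b1 - a1 * b0 ≠ 0 := key2 x0 x1 a0 b0 c0 a1 b1 c1 hx01 hφ0 hφ1
  have hd21 : a2 * b1 - a1 * b2 ≠ 0 := key2 x2 x1 a2 b2 c2 a1 b1 c1 hx21 hφ2 hφ1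
  have hd02 : a0 * b2 - a2 * b0 ≠ 0 := key2 x0 x2 a0 b0 c0 a2 b2 c2 (Ne.symm hx20) hφ0 hφ2
  set u : ℂ := (a2 * b1 - a1 * b2) / (a0 * b1 - a1 * b0) with hu_def
  set w : ℂ := (a0 * b2 - a2 * b0) / (a0 * b1 - a1 * b0) with hw_def
  have hu0 : u ≠ 0 := div_ne_zero hd21 hd01
  have hw0 : w ≠ 0 := div_ne_zero hd02 hd01
  have hx10s : x1 - x0 ≠ 0 := sub_ne_zero.mpr hx10
  set α : ℂ := (x1 - x2) / (x1 - x0) with hα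
  set β : ℂ := (x2 - x0) / (x1 - x0) with hβ
  have hαβ1 : α + β = 1 := by rw [hα, hβ]; field_simp; ring
  have hαβ2 : α * x0 + β * x1 = x2 := by rw [hα, hβ]; field_simp; ring
  -- the one-variable relation
  have hrel : ∀ z : ℂ, c2 * (u * z + w) ^ (d - 1) = α * c0 * z ^ (d - 1) + β * c1 := by
    intro z
    set s : ℂ := (z * b1 - b0) / (a0 * b1 - a1 * b0) with hs
    set t : ℂ := (a0 - z * a1) / (a0 * b1 - a1 * b0) with ht
    have hL0 : a0 * s + b0 * t = z := by
      rw [hs, ht, mul_div_assoc', mul_div_assoc', ← add_div, div_eq_iff hd01]; ring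
    have hL1 : a1 * s + b1 * t = 1 := by
      rw [hs, ht, mul_div_assoc', mul_div_assoc', ← add_div, div_eq_iff hd01]; ring
    have hL2 : a2 * s + b2 * t = u * z + w := by rw [hs, ht, hu_def, hw_def]; field_simp; ring
    have h0' := hφ0 s t; rw [hL0] at h0'
    have h1' := hφ1 s t; rw [hL1, one_pow] at h1'
    have h2' := hφ2 s t; rw [hL2] at h2'
    linear_combination α * h0' + β * h1' - h2' - A s t * hαβ1 - B s t * hαβ2
  -- translate into a polynomial identity and look at the coefficient in degree d-2
  have hp0 : (Polynomial.C c2 * (Polynomial.C u * Polynomial.X + Polynomial.C w) ^ (d - 1)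
      - Polynomial.C (α * c0) * Polynomial.X ^ (d - 1)
      - Polynomial.C (β * c1) : Polynomial ℂ) = 0 := by
    apply Polynomial.funext
    intro z
    simp only [Polynomial.eval_sub, Polynomial.eval_mul, Polynomial.eval_pow,
      Polynomial.eval_add, Polynomial.eval_C, Polynomial.eval_X, Polynomial.eval_zero]
    linear_combination hrel z
  have hfact : (Polynomial.C u * Polynomial.X + Polynomial.C w : Polynomial ℂ)
      = Polynomial.C u * (Polynomial.X + Polynomial.C (w / u)) := by
    rw [mul_add, ← Polynomial.C_mul, mul_div_cancel₀ _ hu0]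
  have hch2 : (d - 1).choose (d - 2) = d - 1 := by
    rw [show d - 2 = (d - 1) - 1 by omega, Nat.choose_symm (by omega : 1 ≤ d - 1),
      Nat.choose_one_right]
  have hcpow : ((Polynomial.C u * Polynomial.X + Polynomial.C w : Polynomial ℂ) ^ (d - 1)).coeff
      (d - 2) = (d - 1 : ℕ) * u ^ (d - 2) * w := by
    rw [hfact, mul_pow, ← Polynomial.C_pow, Polynomial.coeff_C_mul,
      Polynomial.coeff_X_add_C_pow, show d - 1 - (d - 2) = 1 by omega, hch2, pow_one,
      show d - 1 = (d - 2) + 1 by omega, pow_succ]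
    field_simp
  have hco := congrArg (fun q : Polynomial ℂ => q.coeff (d - 2)) hp0
  simp only [Polynomial.coeff_sub, Polynomial.coeff_C_mul, hcpow, Polynomial.coeff_X_pow,
    Polynomial.coeff_C, Polynomial.coeff_zero, if_neg (show ¬(d - 2 = d - 1) by omega),
    if_neg (show ¬(d - 2 = 0) by omega), mul_zero, sub_zero] at hco
  exact (mul_ne_zero hc2 (mul_ne_zero (mul_ne_zero (Nat.cast_ne_zero.mpr hn0)
    (pow_ne_zero _ hu0)) hw0)) hco
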